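/- Given orthonormal systems v₁,...,v_k ∈ R^n and a k-dimensional subspace F ⊆ R^n, there exists an orthonormal system ṽ₁,...,ṽ_k ∈ F such that Σ_{i=1}^k dist²(v_i, F) ≤ Σ_{i=1}^k ‖v_i − ṽ_i‖² ≤ 2 Σ_{i=1}^k dist²(v_i, F). -/

import Mathlib

open scoped RealInnerProductSpace

private lemma onsum_inner {E : Type*} [NormedAddCommGroup E] [InnerProductSpace ℝ E] {m : ℕ}
    {x : Fin m → E} (hx : Orthonormal ℝ x) (a b : Fin m → ℝ) :
    ⟪∑ i, a i • x i, ∑ i, b i • x i⟫ = ∑ i, a i * b i := by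
  rw [sum_inner]
  simp_rw [real_inner_smul_left, hx.inner_right_fintype]

private lemma parseval_cols {m : ℕ} (b : OrthonormalBasis (Fin m) ℝ (EuclideanSpace ℝ (Fin m)))
    (i i' : Fin m) : ∑ j, b j i * b j i' = if i = i' then 1 else 0 := by
  have h := b.sum_inner_mul_inner (EuclideanSpace.single i (1:ℝ)) (EuclideanSpace.single i' (1:ℝ))
  simp [EuclideanSpace.inner_single_left, EuclideanSpace.inner_single_right,
    EuclideanSpace.single_apply, real_inner_comm] at h
  rw [h]
  simp [eq_comm]

set_option maxHeartbeats 1000000 in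
theorem exists_orthonormal_in_subspace_close {n k : ℕ}
    (v : Fin k → EuclideanSpace ℝ (Fin n))
    (hv : Orthonormal ℝ v)
    (F : Submodule ℝ (EuclideanSpace ℝ (Fin n)))
    (hF : Module.finrank ℝ F = k) :
    ∃ w : Fin k → EuclideanSpace ℝ (Fin n),
      (∀ i, w i ∈ F) ∧ Orthonormal ℝ w ∧
      (∑ i, (Metric.infDist (v i) (F : Set (EuclideanSpace ℝ (Fin n)))) ^ 2
          ≤ ∑ i, ‖v i - w i‖ ^ 2) ∧
      (∑ i, ‖v i - w i‖ ^ 2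
          ≤ 2 * ∑ i, (Metric.infDist (v i) (F : Set (EuclideanSpace ℝ (Fin n)))) ^ 2) := by
  classical
  set p : Fin k → EuclideanSpace ℝ (Fin n) := fun i => (F.orthogonalProjectionOnto (v i) : EuclideanSpace ℝ (Fin n)) with hp
  have hp_mem : ∀ i, p i ∈ F := fun i => SetLike.coe_mem _
  set G : Matrix (Fin k) (Fin k) ℝ := Matrix.of fun i j => ⟪p i, p j⟫ with hGdef
  have hG : G.IsHermitian := by
    ext i j
    simp only [Matrix.conjTranspose_apply, hGdef, Matrix.of_apply, star_trivial]
    exact real_inner_comm _ _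
  set u : Fin k → EuclideanSpace ℝ (Fin k) := fun j => hG.eigenvectorBasis j with hu_def
  set lam : Fin k → ℝ := hG.eigenvalues with hlam_def
  have heig : ∀ j i, ∑ i', ⟪p i, p i'⟫ * u j i' = lam j * u j i := by
    intro j i
    have h := hG.mulVec_eigenvectorBasis j
    have := congrFun h i
    simpa [Matrix.mulVec, dotProduct, hGdef] using this
  -- orthonormality of u as a sum identity
  have hu_sum : ∀ a b, ∑ i, u a i * u b i = if a = b then 1 else 0 := by
    intro a b
    have h := orthonormal_iff_ite.mp hG.eigenvectorBasis.orthonormal a b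
    refine (Finset.sum_congr rfl fun i _ => mul_comm _ _).trans ?_
    simpa [PiLp.inner_apply, RCLike.inner_apply, starRingEnd_apply] using h
  have hpar : ∀ i i', ∑ j, u j i * u j i' = if i = i' then 1 else 0 :=
    parseval_cols hG.eigenvectorBasis
  set vt : Fin k → EuclideanSpace ℝ (Fin n) := fun j => ∑ i, u j i • v i with hvt_def
  set f : Fin k → EuclideanSpace ℝ (Fin n) := fun j => ∑ i, u j i • p i with hf_def
  have hvt_on : Orthonormal ℝ vt := by
    rw [orthonormal_iff_ite]
    intro a b
    rw [hvt_def]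
    simp only
    rw [onsum_inner hv]
    exact hu_sum a b
  have hf_mem : ∀ j, f j ∈ F := fun j => Submodule.sum_mem _ fun i _ =>
    Submodule.smul_mem _ _ (hp_mem i)
  have hPvt : ∀ j, (F.orthogonalProjectionOnto (vt j) : EuclideanSpace ℝ (Fin n)) = f j := by
    intro j
    rw [hvt_def, hf_def]
    simp only [map_sum, map_smul, Submodule.coe_sum, SetLike.val_smul]
    rfl
  have hinner_pf : ∀ i b, ⟪p i, f b⟫ = lam b * u b i := by
    intro i b
    rw [hf_def]
    simp only [inner_sum, real_inner_smul_right]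
    rw [← heig b i]
    exact Finset.sum_congr rfl fun i' _ => mul_comm _ _
  have hff : ∀ a b, ⟪f a, f b⟫ = if a = b then lam b else 0 := by
    intro a b
    nth_rewrite 1 [hf_def]
    simp only [sum_inner, real_inner_smul_left, hinner_pf]
    have : ∑ i, u a i * (lam b * u b i) = lam b * ∑ i, u a i * u b i := by
      rw [Finset.mul_sum]; exact Finset.sum_congr rfl fun i _ => by ring
    rw [this, hu_sum a b]
    split <;> simp
  have hfnorm : ∀ j, ‖f j‖ ^ 2 = lam j := by
    intro j
    rw [← real_inner_self_eq_norm_sq, hff j j, if_pos rfl]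
  have hlam_nonneg : ∀ j, 0 ≤ lam j := fun j => (hfnorm j) ▸ sq_nonneg _
  have hlam_le_one : ∀ j, lam j ≤ 1 := by
    intro j
    have hnle : ‖f j‖ ≤ 1 := by
      rw [← hPvt j]
      have h1 : ‖(F.orthogonalProjectionOnto (vt j) : EuclideanSpace ℝ (Fin n))‖ = ‖F.orthogonalProjectionOnto (vt j)‖ := rfl
      rw [h1]
      calc ‖F.orthogonalProjectionOnto (vt j)‖
          ≤ ‖(F.orthogonalProjectionOnto : EuclideanSpace ℝ (Fin n) →L[ℝ] F)‖ * ‖vt j‖ :=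
            (F.orthogonalProjectionOnto).le_opNorm _
        _ ≤ 1 * 1 := by
            apply mul_le_mul (Submodule.orthogonalProjectionOnto_norm_le (K := F)) (le_of_eq (hvt_on.1 j))
              (norm_nonneg _) zero_le_one
        _ = 1 := one_mul 1
    calc lam j = ‖f j‖ ^ 2 := (hfnorm j).symm
      _ ≤ 1 ^ 2 := pow_le_pow_left₀ (norm_nonneg _) hnle 2
      _ = 1 := one_pow 2
  -- trace identity
  have htrace : ∑ i, ⟪p i, p i⟫ = ∑ j, lam j := by
    have expand : ∀ j, lam j = ∑ i, ∑ i', (u j i * u j i') * ⟪p i, p i'⟫ := by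
      intro j
      rw [← hfnorm j, ← real_inner_self_eq_norm_sq]
      nth_rewrite 1 [hf_def]
      simp only [sum_inner, real_inner_smul_left]
      refine Finset.sum_congr rfl fun i _ => ?_
      rw [hf_def]
      simp only [inner_sum, real_inner_smul_right, Finset.mul_sum]
      exact Finset.sum_congr rfl fun i' _ => by ring
    have swap : ∑ j, ∑ i, ∑ i', (u j i * u j i') * ⟪p i, p i'⟫
        = ∑ i, ∑ i', ∑ j, (u j i * u j i') * ⟪p i, p i'⟫ := by
      rw [Finset.sum_comm]
      exact Finset.sum_congr rfl fun i _ => Finset.sum_comm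
    calc ∑ i, ⟪p i, p i⟫
        = ∑ i, ∑ i', (if i = i' then (1:ℝ) else 0) * ⟪p i, p i'⟫ := by
          refine Finset.sum_congr rfl fun i _ => ?_
          simp [ite_mul]
      _ = ∑ i, ∑ i', (∑ j, u j i * u j i') * ⟪p i, p i'⟫ := by
          simp_rw [hpar]
      _ = ∑ i, ∑ i', ∑ j, (u j i * u j i') * ⟪p i, p i'⟫ := by
          simp_rw [Finset.sum_mul]
      _ = ∑ j, ∑ i, ∑ i', (u j i * u j i') * ⟪p i, p i'⟫ := swap.symm
      _ = ∑ j, lam j := Finset.sum_congr rfl fun j _ => (expand j).symm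
  -- distance formula
  have hdist : ∀ i, (Metric.infDist (v i) (F : Set (EuclideanSpace ℝ (Fin n)))) ^ 2 = 1 - ⟪p i, p i⟫ := by
    intro i
    have h1 : Metric.infDist (v i) (F : Set (EuclideanSpace ℝ (Fin n))) = ‖v i - p i‖ := by
      rw [Metric.infDist_eq_iInf, hp]
      simp only
      rw [← Submodule.starProjection_apply, Submodule.starProjection_minimal]
      simp_rw [dist_eq_norm]
      rfl
    rw [h1]
    have horth : ⟪v i - p i, p i⟫ = 0 :=
      Submodule.starProjection_inner_eq_zero (K := F) (v i) (p i) (hp_mem i)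
    have hpyth : ‖v i‖ ^ 2 = ‖v i - p i‖ ^ 2 + ⟪p i, p i⟫ := by
      have : v i = (v i - p i) + p i := by abel
      nth_rewrite 1 [this]
      rw [norm_add_sq_real, horth, real_inner_self_eq_norm_sq]
      ring
    have hn1 : ‖v i‖ = 1 := hv.1 i
    rw [hn1] at hpyth
    linarith [hpyth]
  -- construction of w'
  set S : Set (Fin k) := {j | lam j ≠ 0} with hS_def
  set q : Fin k → F := fun j => ⟨f j, hf_mem j⟩ with hq_def
  set c : Fin k → F := fun j => (Real.sqrt (lam j))⁻¹ • q j with hc_def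
  have hcS : Orthonormal ℝ (S.restrict c) := by
    rw [orthonormal_iff_ite]
    rintro ⟨a, ha⟩ ⟨b, hb⟩
    have hla : 0 < lam a := lt_of_le_of_ne (hlam_nonneg a) (Ne.symm ha)
    have hlb : 0 < lam b := lt_of_le_of_ne (hlam_nonneg b) (Ne.symm hb)
    simp only [Set.restrict_apply, hc_def]
    rw [Submodule.coe_inner]
    simp only [SetLike.val_smul, real_inner_smul_left, real_inner_smul_right, hq_def]
    show ⟪(Real.sqrt (lam a))⁻¹ • f a, (Real.sqrt (lam b))⁻¹ • f b⟫ = if (⟨a, ha⟩ : S) = ⟨b, hb⟩ then 1 else 0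
    simp only [real_inner_smul_left, real_inner_smul_right]
    rw [hff a b]
    simp only [Subtype.mk.injEq]
    by_cases hab : a = b
    · rw [if_pos hab, if_pos hab]
      subst hab
      rw [← Real.sqrt_mul_self (le_of_lt hla)]
      have hs : Real.sqrt (lam a) ≠ 0 := by positivity
      field_simp
      rw [Real.sq_sqrt (Real.sqrt_nonneg _)]
    · rw [if_neg hab, if_neg hab]
      ring
  have hcard : Module.finrank ℝ F = Fintype.card (Fin k) := by
    rw [hF, Fintype.card_fin]
  obtain ⟨b, hb⟩ := hcS.exists_orthonormalBasis_extension_of_card_eq hcard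
  set w' : Fin k → EuclideanSpace ℝ (Fin n) := fun j => (b j : EuclideanSpace ℝ (Fin n)) with hw'_def
  have hw'_mem : ∀ j, w' j ∈ F := by
    intro j
    rw [hw'_def]
    exact SetLike.coe_mem _
  have hw'_on : Orthonormal ℝ w' := by
    rw [orthonormal_iff_ite]
    intro a b'
    rw [hw'_def]
    simp only
    rw [← Submodule.coe_inner]
    exact orthonormal_iff_ite.mp b.orthonormal a b'
  have hkey : ∀ j, ⟪vt j, w' j⟫ = Real.sqrt (lam j) := by
    intro j
    have hsplit : ⟪vt j, w' j⟫ = ⟪f j, w' j⟫ := by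
      have : vt j = (vt j - f j) + f j := by abel
      rw [this, inner_add_left]
      have horth : ⟪vt j - f j, w' j⟫ = 0 := by
        rw [← hPvt j]
        exact Submodule.starProjection_inner_eq_zero (K := F) (vt j) (w' j) (hw'_mem j)
      rw [horth, zero_add]
    rw [hsplit]
    by_cases hj : lam j = 0
    · have hf0 : f j = 0 := by
        have := hfnorm j
        rw [hj] at this
        have : ‖f j‖ = 0 := by
          have h2 := sq_eq_zero_iff.mp this
          exact h2
        exact norm_eq_zero.mp this
      rw [hf0, hj]
      simp
    · have hbj : b j = c j := hb j hj
      have : w' j = (Real.sqrt (lam j))⁻¹ • f j := by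
        rw [hw'_def]
        simp only
        rw [hbj, hc_def]
        rfl
      rw [this, real_inner_smul_right, real_inner_self_eq_norm_sq, hfnorm j]
      have hlj : 0 < lam j := lt_of_le_of_ne (hlam_nonneg j) (Ne.symm hj)
      rw [inv_mul_eq_div, Real.div_sqrt]
  -- the final family
  set w : Fin k → EuclideanSpace ℝ (Fin n) := fun i => ∑ j, u j i • w' j with hw_def
  have hw_mem : ∀ i, w i ∈ F := fun i => Submodule.sum_mem _ fun j _ =>
    Submodule.smul_mem _ _ (hw'_mem j)
  have hw_on : Orthonormal ℝ w := by
    rw [orthonormal_iff_ite]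
    intro a b'
    rw [hw_def]
    simp only
    rw [onsum_inner hw'_on]
    exact hpar a b'
  refine ⟨w, hw_mem, hw_on, ?_, ?_⟩
  · refine Finset.sum_le_sum fun i _ => ?_
    have h1 : Metric.infDist (v i) (F : Set (EuclideanSpace ℝ (Fin n))) ≤ ‖v i - w i‖ := by
      rw [← dist_eq_norm]
      exact Metric.infDist_le_dist_of_mem (hw_mem i)
    exact pow_le_pow_left₀ (Metric.infDist_nonneg) h1 2
  · have hsum_inner : ∑ i, ⟪v i, w i⟫ = ∑ j, Real.sqrt (lam j) := by
      have step : ∀ i, ⟪v i, w i⟫ = ∑ j, u j i * ⟪v i, w' j⟫ := by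
        intro i
        rw [hw_def]
        simp only [inner_sum, real_inner_smul_right]
      simp_rw [step]
      rw [Finset.sum_comm]
      refine Finset.sum_congr rfl fun j _ => ?_
      rw [← hkey j, hvt_def]
      simp only [sum_inner, real_inner_smul_left]
    have hlhs : ∑ i, ‖v i - w i‖ ^ 2 = ∑ j, (2 - 2 * Real.sqrt (lam j)) := by
      have : ∀ i, ‖v i - w i‖ ^ 2 = 2 - 2 * ⟪v i, w i⟫ := by
        intro i
        rw [norm_sub_sq_real, hv.1 i, hw_on.1 i]
        ring
      simp_rw [this]
      rw [Finset.sum_sub_distrib, Finset.sum_sub_distrib, ← Finset.mul_sum, ← Finset.mul_sum,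
        hsum_inner]
    have hrhs : ∑ i, (Metric.infDist (v i) (F : Set (EuclideanSpace ℝ (Fin n)))) ^ 2 = ∑ j, (1 - lam j) := by
      simp_rw [hdist]
      rw [Finset.sum_sub_distrib, htrace, Finset.sum_sub_distrib]
    rw [hlhs, hrhs, Finset.mul_sum]
    refine Finset.sum_le_sum fun j _ => ?_
    have hsq : lam j ≤ Real.sqrt (lam j) := by
      have h1 : lam j ^ 2 ≤ lam j := by nlinarith [hlam_nonneg j, hlam_le_one j]
      calc lam j = Real.sqrt (lam j ^ 2) := (Real.sqrt_sq (hlam_nonneg j)).symm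
        _ ≤ Real.sqrt (lam j) := Real.sqrt_le_sqrt h1
    nlinarith [hsq]
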